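/- Let V be a finite-dimensional real inner product space, let σ⁰ ∈ V with σ⁰ ≠ 0, and let W : V → ℝ be a continuous function with W(σ⁰) > 0. Let (cₙ) be a sequence of nonnegative real numbers with cₙ → 0, and for each n let Cₙ : V → V be a self-adjoint positive definite linear operator such that: (i) W(σ) ≤ ⟨σ, Cₙ⁻¹σ⟩ for every σ ∈ V; (ii) ⟨σ⁰, Cₙ⁻¹σ⁰⟩ ≤ W(σ⁰) + cₙ; (iii) ⟨e, Cₙe⟩ ≤ cₙ‖e‖² for every e ∈ V with ⟨e, σ⁰⟩ = 0. Then the component of Cₙσ⁰ orthogonal to σ⁰ tends to zero, that is, ‖Cₙσ⁰ − (⟨σ⁰, Cₙσ⁰⟩/‖σ⁰‖²)·σ⁰‖ → 0 as n → ∞. -/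

import Mathlib

open scoped RealInnerProductSpace
open Filter

private lemma cs_form_aux {V : Type*} [NormedAddCommGroup V] [InnerProductSpace ℝ V]
    (T : V →ₗ[ℝ] V)
    (hsym : ∀ u v : V, ⟪T u, v⟫ = ⟪u, T v⟫)
    (hpos : ∀ u : V, 0 ≤ ⟪u, T u⟫) (u v : V) :
    ⟪u, T v⟫ ^ 2 ≤ ⟪u, T u⟫ * ⟪v, T v⟫ := by
  have hsym' : ⟪v, T u⟫ = ⟪u, T v⟫ := by rw [← hsym u v, real_inner_comm]
  have key : ∀ t : ℝ, 0 ≤ ⟪v, T v⟫ * (t * t) + (2 * ⟪u, T v⟫) * t + ⟪u, T u⟫ := by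
    intro t
    have h := hpos (u + t • v)
    have expand : ⟪u + t • v, T (u + t • v)⟫
        = ⟪u, T u⟫ + t * ⟪u, T v⟫ + t * ⟪v, T u⟫ + t ^ 2 * ⟪v, T v⟫ := by
      rw [map_add, map_smul]
      simp only [inner_add_left, inner_add_right, real_inner_smul_left, real_inner_smul_right]
      ring
    rw [expand, hsym'] at h
    nlinarith [h]
  have hd := discrim_le_zero key
  unfold discrim at hd
  nlinarith [hd]

/-- Coordinate-free form of the statement that the cross-term vector `a_δ` in the block
decomposition (1.18) tends to zero: the component of `Cₙσ⁰` orthogonal to `σ⁰` tends to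
zero. -/
theorem orthogonal_component_tendsto_zero
    {V : Type*} [NormedAddCommGroup V] [InnerProductSpace ℝ V] [FiniteDimensional ℝ V]
    (σ0 : V) (hσ0 : σ0 ≠ 0)
    (W : V → ℝ) (hWcont : Continuous W) (hWpos : 0 < W σ0)
    (c : ℕ → ℝ) (hc_nonneg : ∀ n, 0 ≤ c n)
    (hc_lim : Filter.Tendsto c Filter.atTop (nhds 0))
    (C : ℕ → (V ≃ₗ[ℝ] V))
    (hC_sa : ∀ n, ∀ u v : V, ⟪(C n) u, v⟫ = ⟪u, (C n) v⟫)
    (hC_pd : ∀ n, ∀ u : V, u ≠ 0 → 0 < ⟪u, (C n) u⟫)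
    (hbound : ∀ n, ∀ σ : V, W σ ≤ ⟪σ, (C n).symm σ⟫)
    (hattain : ∀ n, ⟪σ0, (C n).symm σ0⟫ ≤ W σ0 + c n)
    (hsmall : ∀ n, ∀ e : V, ⟪e, σ0⟫ = 0 → ⟪e, (C n) e⟫ ≤ c n * ‖e‖ ^ 2) :
    Filter.Tendsto
      (fun n => ‖(C n) σ0 - (⟪σ0, (C n) σ0⟫ / ‖σ0‖ ^ 2) • σ0‖)
      Filter.atTop (nhds 0) := by
  set N2 : ℝ := ‖σ0‖ ^ 2 with hN2def
  have hσ0n : ‖σ0‖ ≠ 0 := norm_ne_zero_iff.mpr hσ0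
  have hN2 : 0 < N2 := by rw [hN2def]; positivity
  set A : ℕ → ℝ := fun n => ⟪σ0, (C n) σ0⟫ with hAdef
  set a : ℕ → V := fun n => (C n) σ0 - (A n / N2) • σ0 with hadef
  -- basic positivity
  have hA : ∀ n, 0 < A n := fun n => hC_pd n σ0 hσ0
  have hpos : ∀ n, ∀ u : V, 0 ≤ ⟪u, (C n) u⟫ := by
    intro n u
    rcases eq_or_ne u 0 with rfl | hu
    · simp
    · exact (hC_pd n u hu).le
  have hCS : ∀ n, ∀ u v : V, ⟪u, (C n) v⟫ ^ 2 ≤ ⟪u, (C n) u⟫ * ⟪v, (C n) v⟫ := by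
    intro n
    exact cs_form_aux ((C n) : V →ₗ[ℝ] V) (hC_sa n) (hpos n)
  -- orthogonality of a n
  have hinner_self : ⟪σ0, σ0⟫ = N2 := real_inner_self_eq_norm_sq σ0
  have ha_orth : ∀ n, ⟪a n, σ0⟫ = 0 := by
    intro n
    have h1 : ⟪(C n) σ0, σ0⟫ = A n := hC_sa n σ0 σ0
    simp only [hadef, inner_sub_left, real_inner_smul_left, h1, hinner_self]
    field_simp
    ring
  -- decomposition
  have hdecomp : ∀ n, (C n) σ0 = a n + (A n / N2) • σ0 := by
    intro n; simp [hadef]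
  -- ⟪a n, C n σ0⟫ = ‖a n‖^2
  have ha_inner : ∀ n, ⟪a n, (C n) σ0⟫ = ‖a n‖ ^ 2 := by
    intro n
    rw [hdecomp n, inner_add_right, real_inner_smul_right, ha_orth n,
      real_inner_self_eq_norm_sq]
    ring
  -- ‖a n‖^2 ≤ c n * A n
  have ha_sq : ∀ n, ‖a n‖ ^ 2 ≤ c n * A n := by
    intro n
    have h1 := hCS n (a n) σ0
    rw [ha_inner n] at h1
    have h2 : ⟪a n, (C n) (a n)⟫ ≤ c n * ‖a n‖ ^ 2 := hsmall n (a n) (ha_orth n)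
    rcases eq_or_lt_of_le (sq_nonneg ‖a n‖) with h0 | h0
    · rw [← h0]; exact mul_nonneg (hc_nonneg n) (hA n).le
    · have h3 : (‖a n‖ ^ 2) ^ 2 ≤ (c n * ‖a n‖ ^ 2) * A n := by
        calc (‖a n‖ ^ 2) ^ 2 ≤ ⟪a n, (C n) (a n)⟫ * A n := h1
          _ ≤ (c n * ‖a n‖ ^ 2) * A n := by
              exact mul_le_mul_of_nonneg_right h2 (hA n).le
      nlinarith [h3, h0]
  -- P n
  set P : ℕ → ℝ := fun n => ⟪σ0, (C n).symm σ0⟫ with hPdef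
  have hP1 : ∀ n, W σ0 ≤ P n := fun n => hbound n σ0
  have hP2 : ∀ n, P n ≤ W σ0 + c n := hattain
  have hAP : ∀ n, N2 ^ 2 ≤ A n * P n := by
    intro n
    have h1 := hCS n σ0 ((C n).symm σ0)
    rw [LinearEquiv.apply_symm_apply] at h1
    rw [hinner_self] at h1
    calc N2 ^ 2 ≤ A n * ⟪(C n).symm σ0, σ0⟫ := h1
      _ = A n * P n := by rw [real_inner_comm]
  -- test vector s n
  set s : ℕ → V := fun n => (N2 / A n) • ((C n) σ0) with hsdef
  have hs_sub : ∀ n, s n - σ0 = (N2 / A n) • a n := by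
    intro n
    rw [hsdef]
    simp only
    rw [hdecomp n, smul_add, smul_smul]
    have : N2 / A n * (A n / N2) = 1 := by
      field_simp [(hA n).ne']
    rw [this, one_smul]
    abel
  have hs_norm_sq : ∀ n, ‖s n - σ0‖ ^ 2 ≤ c n * (W σ0 + c n) := by
    intro n
    rw [hs_sub n, norm_smul]
    have h1 : (‖(N2 / A n : ℝ)‖) ^ 2 = (N2 / A n) ^ 2 := by
      rw [Real.norm_eq_abs, sq_abs]
    rw [mul_pow, h1]
    have key : N2 ^ 2 / A n ≤ W σ0 + c n := by
      rw [div_le_iff₀ (hA n)]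
      calc N2 ^ 2 ≤ A n * P n := hAP n
        _ ≤ A n * (W σ0 + c n) := by
            exact mul_le_mul_of_nonneg_left (hP2 n) (hA n).le
        _ = (W σ0 + c n) * A n := by ring
    calc (N2 / A n) ^ 2 * ‖a n‖ ^ 2
        ≤ (N2 / A n) ^ 2 * (c n * A n) := by
          exact mul_le_mul_of_nonneg_left (ha_sq n) (by positivity)
      _ = c n * (N2 ^ 2 / A n) := by
          field_simp [(hA n).ne']
      _ ≤ c n * (W σ0 + c n) := by
          exact mul_le_mul_of_nonneg_left key (hc_nonneg n)
  -- s n → σ0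
  have hbound_lim : Tendsto (fun n => c n * (W σ0 + c n)) atTop (nhds 0) := by
    have := hc_lim.mul ((tendsto_const_nhds (x := W σ0)).add hc_lim)
    simpa using this
  have hs_norm_sq_lim : Tendsto (fun n => ‖s n - σ0‖ ^ 2) atTop (nhds 0) := by
    apply squeeze_zero (fun n => by positivity) hs_norm_sq hbound_lim
  have hs_norm_lim : Tendsto (fun n => ‖s n - σ0‖) atTop (nhds 0) := by
    have h := (Real.continuous_sqrt.tendsto 0).comp hs_norm_sq_lim
    simp only [Function.comp_def, Real.sqrt_zero] at h
    convert h using 2 with n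
    rw [Real.sqrt_sq (norm_nonneg _)]
  have hs_lim : Tendsto s atTop (nhds σ0) := by
    rw [tendsto_iff_norm_sub_tendsto_zero]
    exact hs_norm_lim
  have hWs_lim : Tendsto (fun n => W (s n)) atTop (nhds (W σ0)) :=
    (hWcont.tendsto σ0).comp hs_lim
  -- W (s n) ≤ N2^2 / A n
  have hWs_bound : ∀ n, W (s n) ≤ N2 ^ 2 / A n := by
    intro n
    have h1 := hbound n (s n)
    have h2 : ⟪s n, (C n).symm (s n)⟫ = N2 ^ 2 / A n := by
      rw [hsdef]
      simp only [map_smul, real_inner_smul_left, real_inner_smul_right,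
        LinearEquiv.symm_apply_apply]
      rw [hC_sa n σ0 σ0]
      field_simp [(hA n).ne']
      ring
    rw [h2] at h1
    exact h1
  -- eventually W (s n) ≥ W σ0 / 2 > 0, so A n ≤ N2^2 / (W σ0 / 2)
  have hev : ∀ᶠ n in atTop, W σ0 / 2 < W (s n) :=
    hWs_lim.eventually (eventually_gt_nhds (by linarith))
  have ha_final : ∀ᶠ n in atTop, ‖a n‖ ^ 2 ≤ c n * (N2 ^ 2 / (W σ0 / 2)) := by
    filter_upwards [hev] with n hn
    have hW2 : 0 < W σ0 / 2 := by linarith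
    have hWsn : 0 < W (s n) := lt_trans hW2 hn
    have hAn_le : A n ≤ N2 ^ 2 / (W σ0 / 2) := by
      have h1 : W (s n) * A n ≤ N2 ^ 2 := by
        have := hWs_bound n
        rw [le_div_iff₀ (hA n)] at this
        linarith
      rw [le_div_iff₀ hW2]
      nlinarith [h1, hA n, hn]
    calc ‖a n‖ ^ 2 ≤ c n * A n := ha_sq n
      _ ≤ c n * (N2 ^ 2 / (W σ0 / 2)) :=
          mul_le_mul_of_nonneg_left hAn_le (hc_nonneg n)
  have hbound2 : Tendsto (fun n => c n * (N2 ^ 2 / (W σ0 / 2))) atTop (nhds 0) := by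
    have := hc_lim.mul_const (N2 ^ 2 / (W σ0 / 2))
    simpa using this
  have ha_sq_lim : Tendsto (fun n => ‖a n‖ ^ 2) atTop (nhds 0) :=
    squeeze_zero' (Eventually.of_forall fun n => by positivity) ha_final hbound2
  have ha_lim : Tendsto (fun n => ‖a n‖) atTop (nhds 0) := by
    have h := (Real.continuous_sqrt.tendsto 0).comp ha_sq_lim
    simp only [Function.comp_def, Real.sqrt_zero] at h
    convert h using 2 with n
    rw [Real.sqrt_sq (norm_nonneg _)]
  exact ha_lim
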